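/- Let A = colim_{λ} A_λ be a filtered colimit of commutative rings with ring maps φ_λ : A_λ → B_λ forming a compatible system with colimit φ : A → B = colim_λ B_λ, where each B_λ is a finite A_λ-module. If φ : A → B is flat and each B_μ is a finitely presented A_μ-module for μ large, then there exists λ_0 such that φ_λ : A_λ → B_λ is flat for all λ ≥ λ_0. -/

import Mathlib

open TensorProduct LinearMap

/-- Descent of flatness along a filtered colimit of rings (EGA IV 11.2.6): given a
directed system of rings `(A i)` and `(B i)` with compatible finite module structures
`φ i : A i →+* B i`, colimit map `φ∞ : A∞ →+* B∞`, such that `B j` is the base change of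
`B i` along `A i → A j` for large `i ≤ j` and `B i` is a finitely presented `A i`-module
for large `i`, if `φ∞` is flat then `φ i` is flat for all sufficiently large `i`. -/
theorem stmt_15 {ι : Type*} [Preorder ι] [IsDirected ι (· ≤ ·)] [Nonempty ι]
    (A B : ι → Type*) [∀ i, CommRing (A i)] [∀ i, CommRing (B i)]
    (Ainf Binf : Type*) [CommRing Ainf] [CommRing Binf]
    (fA : ∀ ⦃i j : ι⦄, i ≤ j → (A i →+* A j))
    (fB : ∀ ⦃i j : ι⦄, i ≤ j → (B i →+* B j))
    (φ : ∀ i, A i →+* B i) (φinf : Ainf →+* Binf)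
    (gA : ∀ i, A i →+* Ainf) (gB : ∀ i, B i →+* Binf)
    (hfA_id : ∀ i, fA (le_refl i) = RingHom.id (A i))
    (hfB_id : ∀ i, fB (le_refl i) = RingHom.id (B i))
    (hfA_comp : ∀ ⦃i j k : ι⦄ (hij : i ≤ j) (hjk : j ≤ k) (x : A i),
      fA hjk (fA hij x) = fA (hij.trans hjk) x)
    (hfB_comp : ∀ ⦃i j k : ι⦄ (hij : i ≤ j) (hjk : j ≤ k) (x : B i),
      fB hjk (fB hij x) = fB (hij.trans hjk) x)
    (hsq : ∀ ⦃i j : ι⦄ (h : i ≤ j), (fB h).comp (φ i) = (φ j).comp (fA h))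
    (hgA : ∀ ⦃i j : ι⦄ (h : i ≤ j), (gA j).comp (fA h) = gA i)
    (hgB : ∀ ⦃i j : ι⦄ (h : i ≤ j), (gB j).comp (fB h) = gB i)
    (hφinf : ∀ i, φinf.comp (gA i) = (gB i).comp (φ i))
    -- `Ainf` and `Binf` are the filtered colimits of the systems
    (hAsurj : ∀ x : Ainf, ∃ i a, gA i a = x)
    (hBsurj : ∀ x : Binf, ∃ i b, gB i b = x)
    (hAeq : ∀ i (a a' : A i), gA i a = gA i a' → ∃ j, ∃ h : i ≤ j, fA h a = fA h a')
    (hBeq : ∀ i (b b' : B i), gB i b = gB i b' → ∃ j, ∃ h : i ≤ j, fB h b = fB h b')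
    -- each `B i` is a finite `A i`-module
    (hfin : ∀ i, (φ i).Finite)
    -- `B i` is a finitely presented `A i`-module for `i` large
    (i₀ : ι)
    (hfp : ∀ i, i₀ ≤ i →
      letI := (φ i).toAlgebra
      Module.FinitePresentation (A i) (B i))
    -- the transition maps exhibit `B j` as the base change `B i ⊗_{A i} A j`
    (ℓ : ∀ ⦃i j : ι⦄ (h : i ≤ j),
      letI := (φ i).toAlgebra
      letI := ((φ j).comp (fA h)).toAlgebra
      B i →ₗ[A i] B j)
    (hℓ : ∀ ⦃i j : ι⦄ (h : i ≤ j) (b : B i), ℓ h b = fB h b)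
    (htower : ∀ ⦃i j : ι⦄ (h : i ≤ j),
      letI := (fA h).toAlgebra
      letI := ((φ j).comp (fA h)).toAlgebra
      letI := (φ j).toAlgebra
      IsScalarTower (A i) (A j) (B j))
    (hbc : ∀ ⦃i j : ι⦄ (h : i ≤ j),
      letI := (φ i).toAlgebra
      letI := (fA h).toAlgebra
      letI := ((φ j).comp (fA h)).toAlgebra
      letI := (φ j).toAlgebra
      haveI := htower h
      IsBaseChange (A j) (ℓ h))
    -- flatness of the colimit map
    (hflat : φinf.Flat) :
    ∃ i₁, ∀ i, i₁ ≤ i → (φ i).Flat := by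
  classical
  letI : Algebra (A i₀) (B i₀) := (φ i₀).toAlgebra
  haveI := hfp i₀ le_rfl
  -- a finite presentation at stage i₀
  obtain ⟨n, b, hb⟩ := Module.Finite.exists_fin (R := A i₀) (M := B i₀)
  let p : (Fin n → A i₀) →ₗ[A i₀] B i₀ := Fintype.linearCombination (A i₀) b
  have hpsurj : Function.Surjective p := by
    rw [← LinearMap.range_eq_top, Fintype.range_linearCombination, hb]
  obtain ⟨m, c, hc⟩ := Submodule.fg_iff_exists_fin_generating_family.mp
    (Module.FinitePresentation.fg_ker p hpsurj)
  have hcker : ∀ t, p (c t) = 0 := fun t => by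
    have : c t ∈ LinearMap.ker p := hc ▸ Submodule.subset_span ⟨t, rfl⟩
    simpa using this
  let q : (Fin m → A i₀) →ₗ[A i₀] (Fin n → A i₀) :=
    Fintype.linearCombination (A i₀) c
  -- the corresponding maps at each later stage
  let P : ∀ (j) (_ : i₀ ≤ j), letI := (φ j).toAlgebra; (Fin n → A j) →ₗ[A j] B j :=
    fun j h => letI := (φ j).toAlgebra;
      Fintype.linearCombination (A j) (fun k => fB h (b k))
  have hPapply : ∀ (j) (h : i₀ ≤ j) (v : Fin n → A j),
      P j h v = ∑ k, φ j (v k) * fB h (b k) := by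
    intro j h v
    letI := (φ j).toAlgebra
    simp only [P, Fintype.linearCombination_apply, Algebra.smul_def,
      RingHom.algebraMap_toAlgebra]
  have hPi₀ : ∀ v, P i₀ le_rfl v = p v := by
    intro v
    rw [hPapply]
    simp only [p, Fintype.linearCombination_apply, Algebra.smul_def,
      RingHom.algebraMap_toAlgebra]
    refine Finset.sum_congr rfl fun k _ => ?_
    rw [show fB (le_rfl : i₀ ≤ i₀) (b k) = b k from by
      rw [show (le_rfl : i₀ ≤ i₀) = le_refl i₀ from rfl, hfB_id]; rfl]
  -- compatibility of the stage maps with transitions and with the colimit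
  have L1 : ∀ (j) (h : i₀ ≤ j) (k) (h' : j ≤ k) (v : Fin n → A j),
      fB h' (P j h v) = P k (h.trans h') (fun l => fA h' (v l)) := by
    intro j h k h' v
    rw [hPapply, hPapply, map_sum]
    refine Finset.sum_congr rfl fun l _ => ?_
    have e1 : fB h' (φ j (v l)) = φ k (fA h' (v l)) := RingHom.congr_fun (hsq h') (v l)
    rw [map_mul, e1, hfB_comp]
  -- the colimit-stage map
  letI : Algebra Ainf Binf := φinf.toAlgebra
  haveI hflatinf : Module.Flat Ainf Binf := hflat
  let Pinf : (Fin n → Ainf) →ₗ[Ainf] Binf :=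
    Fintype.linearCombination Ainf (fun k => gB i₀ (b k))
  have hPinfapply : ∀ v, Pinf v = ∑ k, φinf (v k) * gB i₀ (b k) := by
    intro v
    simp only [Pinf, Fintype.linearCombination_apply, Algebra.smul_def,
      RingHom.algebraMap_toAlgebra]
  have L2 : ∀ (j) (h : i₀ ≤ j) (v : Fin n → A j),
      gB j (P j h v) = Pinf (fun l => gA j (v l)) := by
    intro j h v
    rw [hPapply, hPinfapply, map_sum]
    refine Finset.sum_congr rfl fun l _ => ?_
    have e1 : gB j (φ j (v l)) = φinf (gA j (v l)) := (RingHom.congr_fun (hφinf j) (v l)).symm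
    have e2 : gB j (fB h (b l)) = gB i₀ (b l) := RingHom.congr_fun (hgB h) (b l)
    rw [map_mul, e1, e2]
  -- exactness at each finite stage, via base change
  have stage : ∀ (j) (h : i₀ ≤ j),
      letI := (φ j).toAlgebra
      Function.Surjective (P j h) ∧
      LinearMap.ker (P j h)
        = Submodule.span (A j) (Set.range fun t => fun l => fA h (c t l)) := by
    intro j h
    letI : Algebra (A i₀) (A j) := (fA h).toAlgebra
    letI : Algebra (A i₀) (B j) := ((φ j).comp (fA h)).toAlgebra
    letI : Algebra (A j) (B j) := (φ j).toAlgebra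
    haveI := htower h
    have hbcj := hbc h
    let eB : (A j) ⊗[A i₀] (B i₀) ≃ₗ[A j] B j := hbcj.equiv
    let eF : (A j) ⊗[A i₀] (Fin n → A i₀) ≃ₗ[A j] (Fin n → A j) :=
      TensorProduct.piScalarRight (A i₀) (A j) (A j) (Fin n)
    let eG : (A j) ⊗[A i₀] (Fin m → A i₀) ≃ₗ[A j] (Fin m → A j) :=
      TensorProduct.piScalarRight (A i₀) (A j) (A j) (Fin m)
    have hPj : P j h = eB.toLinearMap ∘ₗ (p.baseChange (A j)) ∘ₗ eF.symm.toLinearMap := by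
      apply (Pi.basisFun (A j) (Fin n)).ext
      intro k
      simp only [Pi.basisFun_apply, LinearMap.coe_comp, Function.comp_apply,
        LinearEquiv.coe_coe]
      rw [show P j h (Pi.single k 1) = fB h (b k) from by
        simp [P, Fintype.linearCombination_apply_single]]
      rw [show eF.symm (Pi.single k 1) = (1 : A j) ⊗ₜ[A i₀] Pi.single k 1 from
        TensorProduct.piScalarRight_symm_single _ _ _ _ _ _]
      rw [LinearMap.baseChange_tmul]
      rw [show p (Pi.single k 1) = b k from by
        simp [p, Fintype.linearCombination_apply_single]]
      rw [show eB ((1 : A j) ⊗ₜ[A i₀] b k) = (1 : A j) • (ℓ h (b k)) from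
        hbcj.equiv_tmul _ _]
      rw [one_smul, hℓ]
    have pbcs : Function.Surjective (p.baseChange (A j)) := by
      rw [LinearMap.baseChange_eq_ltensor]
      exact LinearMap.lTensor_surjective _ hpsurj
    have hq : Function.Exact q p := by
      rw [LinearMap.exact_iff, Fintype.range_linearCombination]
      exact hc.symm
    have hexact : Function.Exact (q.baseChange (A j)) (p.baseChange (A j)) := by
      have H := lTensor_exact (A j) hq hpsurj
      rwa [← LinearMap.baseChange_eq_ltensor, ← LinearMap.baseChange_eq_ltensor] at H
    let Qj : (Fin m → A j) →ₗ[A j] (Fin n → A j) :=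
      Fintype.linearCombination (A j) (fun t => fun l => fA h (c t l))
    have hQj : Qj = eF.toLinearMap ∘ₗ (q.baseChange (A j)) ∘ₗ eG.symm.toLinearMap := by
      apply (Pi.basisFun (A j) (Fin m)).ext
      intro t
      simp only [Pi.basisFun_apply, LinearMap.coe_comp, Function.comp_apply,
        LinearEquiv.coe_coe]
      rw [show Qj (Pi.single t 1) = fun l => fA h (c t l) from by
        simp [Qj, Fintype.linearCombination_apply_single]]
      rw [show eG.symm (Pi.single t 1) = (1 : A j) ⊗ₜ[A i₀] Pi.single t 1 from
        TensorProduct.piScalarRight_symm_single _ _ _ _ _ _]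
      rw [LinearMap.baseChange_tmul]
      rw [show q (Pi.single t 1) = c t from by
        simp [q, Fintype.linearCombination_apply_single]]
      rw [show eF ((1 : A j) ⊗ₜ[A i₀] c t)
          = fun l => (c t l) • (1 : A j) from
        TensorProduct.piScalarRightHom_tmul _ _ _ _ _ _]
      funext l
      rw [Algebra.smul_def, RingHom.algebraMap_toAlgebra, mul_one]
    constructor
    · intro x
      obtain ⟨y, hy⟩ := pbcs (eB.symm x)
      refine ⟨eF y, ?_⟩
      rw [hPj]
      simp only [LinearMap.coe_comp, Function.comp_apply, LinearEquiv.coe_coe,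
        LinearEquiv.symm_apply_apply]
      rw [hy]
      simp
    · have hker : LinearMap.ker (P j h) = LinearMap.range Qj := by
        ext v
        simp only [LinearMap.mem_ker, LinearMap.mem_range]
        constructor
        · intro hv
          rw [hPj] at hv
          simp only [LinearMap.coe_comp, Function.comp_apply, LinearEquiv.coe_coe] at hv
          rw [LinearEquiv.map_eq_zero_iff] at hv
          obtain ⟨z, hz⟩ := (hexact _).mp hv
          refine ⟨eG z, ?_⟩
          rw [hQj]
          simp only [LinearMap.coe_comp, Function.comp_apply, LinearEquiv.coe_coe,
            LinearEquiv.symm_apply_apply]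
          rw [hz]
          simp
        · rintro ⟨u, rfl⟩
          rw [hPj, hQj]
          simp only [LinearMap.coe_comp, Function.comp_apply, LinearEquiv.coe_coe,
            LinearEquiv.symm_apply_apply]
          rw [show (p.baseChange (A j)) ((q.baseChange (A j)) (eG.symm u)) = 0 from
            (hexact _).mpr ⟨_, rfl⟩]
          simp
      rw [hker]
      show LinearMap.range
          (Fintype.linearCombination (A j) fun t => fun l => fA h (c t l)) = _
      rw [Fintype.range_linearCombination]
  -- surjectivity at the colimit
  have hPinf_surj : Function.Surjective Pinf := by
    intro x
    obtain ⟨j', bx, rfl⟩ := hBsurj x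
    obtain ⟨j, hj1, hj2⟩ := exists_ge_ge j' i₀
    obtain ⟨v, hv⟩ := (stage j hj2).1 (fB hj1 bx)
    refine ⟨fun l => gA j (v l), ?_⟩
    rw [← L2 j hj2 v, hv]
    exact RingHom.congr_fun (hgB hj1) bx
  let Qiv : Fin m → (Fin n → Ainf) := fun t => fun l => gA i₀ (c t l)
  let Qinf : (Fin m → Ainf) →ₗ[Ainf] (Fin n → Ainf) :=
    Fintype.linearCombination Ainf Qiv
  have hQivker : ∀ t, Pinf (Qiv t) = 0 := by
    intro t
    have h0 := L2 i₀ le_rfl (c t)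
    rw [hPi₀ (c t), hcker t, map_zero] at h0
    exact h0.symm
  -- kernel at the colimit
  have hkerPinf : LinearMap.ker Pinf = Submodule.span Ainf (Set.range Qiv) := by
    apply le_antisymm
    · intro v hv
      rw [LinearMap.mem_ker] at hv
      choose jv av hav using fun k : Fin n => hAsurj (v k)
      obtain ⟨J0, hJ0⟩ := Finset.exists_le (Finset.univ.image jv)
      obtain ⟨J, hJ1, hJ2⟩ := exists_ge_ge J0 i₀
      have hjvJ : ∀ k, jv k ≤ J := fun k =>
        (hJ0 _ (Finset.mem_image_of_mem _ (Finset.mem_univ k))).trans hJ1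
      let vJ : Fin n → A J := fun k => fA (hjvJ k) (av k)
      have hvJ : ∀ k, gA J (vJ k) = v k := fun k => by
        rw [show gA J (vJ k) = gA (jv k) (av k) from
          RingHom.congr_fun (hgA (hjvJ k)) (av k), hav]
      have h0 : gB J (P J hJ2 vJ) = gB J 0 := by
        rw [L2, map_zero, show (fun l => gA J (vJ l)) = v from funext hvJ]
        exact hv
      obtain ⟨K, hJK, hK⟩ := hBeq J _ _ h0
      letI : Algebra (A K) (B K) := (φ K).toAlgebra
      rw [map_zero, L1 J hJ2 K hJK] at hK
      have hmem : (fun l => fA hJK (vJ l)) ∈ LinearMap.ker (P K (hJ2.trans hJK)) := hK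
      rw [(stage K (hJ2.trans hJK)).2,
        ← Fintype.range_linearCombination (A K)] at hmem
      obtain ⟨u, hu⟩ := hmem
      have hvQ : v = Qinf (fun t => gA K (u t)) := by
        funext r
        have h1 : gA K (fA hJK (vJ r)) = gA J (vJ r) := RingHom.congr_fun (hgA hJK) (vJ r)
        have h2 : ∀ t, gA K (fA (hJ2.trans hJK) (c t r)) = gA i₀ (c t r) :=
          fun t => RingHom.congr_fun (hgA (hJ2.trans hJK)) (c t r)
        rw [← hvJ r, ← h1, ← congrFun hu r]
        simp only [Fintype.linearCombination_apply, Finset.sum_apply, Pi.smul_apply,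
          smul_eq_mul, map_sum, map_mul, h2, Qinf, Qiv]
      rw [hvQ]
      have hr : Qinf (fun t => gA K (u t)) ∈ Submodule.span Ainf (Set.range Qiv) := by
        rw [← Fintype.range_linearCombination Ainf Qiv]
        exact ⟨_, rfl⟩
      exact hr
    · rw [Submodule.span_le]
      rintro _ ⟨t, rfl⟩
      exact LinearMap.mem_ker.mpr (hQivker t)
  haveI hfpinf : Module.FinitePresentation Ainf Binf :=
    Module.finitePresentation_of_surjective Pinf hPinf_surj
      (by rw [hkerPinf]; exact Submodule.fg_span (Set.finite_range _))
  haveI hprojinf : Module.Projective Ainf Binf :=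
    Module.freeLocus_eq_univ_iff.mp (Module.freeLocus_eq_univ (R := Ainf) (M := Binf))
  obtain ⟨s, hs⟩ := Module.projective_lifting_property Pinf LinearMap.id hPinf_surj
  -- descend the section to a finite stage
  let w : Fin n → Fin n → Ainf := fun k => s (gB i₀ (b k))
  choose jw aw haw using fun kl : Fin n × Fin n => hAsurj (w kl.1 kl.2)
  obtain ⟨J0, hJ0⟩ := Finset.exists_le (Finset.univ.image jw)
  obtain ⟨J, hJ1, hJi₀⟩ := exists_ge_ge J0 i₀
  have hjwJ : ∀ kl : Fin n × Fin n, jw kl ≤ J := fun kl =>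
    (hJ0 _ (Finset.mem_image_of_mem _ (Finset.mem_univ kl))).trans hJ1
  let u : Fin n → Fin n → A J := fun k l => fA (hjwJ (k, l)) (aw (k, l))
  have hu : ∀ k l, gA J (u k l) = w k l := fun k l => by
    rw [show gA J (u k l) = gA (jw (k, l)) (aw (k, l)) from
      RingHom.congr_fun (hgA (hjwJ (k, l))) _, haw]
  have hsP : ∀ v : Fin n → Ainf, s (Pinf v) = ∑ k, v k • w k := by
    intro v
    simp only [Pinf, Fintype.linearCombination_apply, map_sum, map_smul, w]
  -- the two families of equations, at the colimit
  have haeq : ∀ k : Fin n, gB J (P J hJi₀ (u k)) = gB J (fB hJi₀ (b k)) := by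
    intro k
    rw [L2, show (fun l => gA J (u k l)) = w k from funext (hu k)]
    have h2 : Pinf (w k) = gB i₀ (b k) := LinearMap.congr_fun hs (gB i₀ (b k))
    rw [h2]
    exact (RingHom.congr_fun (hgB hJi₀) (b k)).symm
  have hbeq : ∀ tr : Fin m × Fin n,
      gA J (∑ l, fA hJi₀ (c tr.1 l) * u l tr.2) = gA J 0 := by
    rintro ⟨t, r⟩
    have h1 : s (Pinf (Qiv t)) = 0 := by rw [hQivker t, map_zero]
    rw [hsP] at h1
    have h2 := congrFun h1 r
    simp only [Finset.sum_apply, Pi.smul_apply, smul_eq_mul, Pi.zero_apply, Qiv] at h2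
    rw [map_zero, map_sum]
    calc ∑ l, gA J (fA hJi₀ (c t l) * u l r)
        = ∑ l, gA i₀ (c t l) * w l r := Finset.sum_congr rfl fun l _ => by
          rw [map_mul, show gA J (fA hJi₀ (c t l)) = gA i₀ (c t l) from
            RingHom.congr_fun (hgA hJi₀) _, hu]
      _ = 0 := h2
  choose Ka hKa heqa using fun k : Fin n => hBeq J _ _ (haeq k)
  choose Kb hKb heqb using fun tr : Fin m × Fin n => hAeq J _ _ (hbeq tr)
  obtain ⟨K1, hK1⟩ := Finset.exists_le ((Finset.univ.image Ka) ∪ (Finset.univ.image Kb))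
  obtain ⟨K, hKK1, hJK⟩ := exists_ge_ge K1 J
  have hKaK : ∀ k, Ka k ≤ K := fun k =>
    (hK1 _ (Finset.mem_union_left _ (Finset.mem_image_of_mem _ (Finset.mem_univ k)))).trans hKK1
  have hKbK : ∀ tr, Kb tr ≤ K := fun tr =>
    (hK1 _ (Finset.mem_union_right _
      (Finset.mem_image_of_mem _ (Finset.mem_univ tr)))).trans hKK1
  have hiK : i₀ ≤ K := hJi₀.trans hJK
  -- the descended equations at stage K
  let u' : Fin n → Fin n → A K := fun k l => fA hJK (u k l)
  have ha' : ∀ k, P K hiK (u' k) = fB hiK (b k) := by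
    intro k
    have h3 : fB hJK (P J hJi₀ (u k)) = fB hJK (fB hJi₀ (b k)) := by
      have h4 := congrArg (fB (hKaK k)) (heqa k)
      rwa [hfB_comp, hfB_comp] at h4
    rw [L1 J hJi₀ K hJK, hfB_comp] at h3
    exact h3
  have hb' : ∀ (t : Fin m) (r : Fin n), ∑ l, fA hiK (c t l) * u' l r = 0 := by
    intro t r
    have h3 : fA hJK (∑ l, fA hJi₀ (c t l) * u l r) = fA hJK 0 := by
      have h4 := congrArg (fA (hKbK (t, r))) (heqb (t, r))
      rwa [hfA_comp, hfA_comp] at h4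
    rw [map_zero, map_sum] at h3
    calc ∑ l, fA hiK (c t l) * u' l r
        = ∑ l, fA hJK (fA hJi₀ (c t l) * u l r) := Finset.sum_congr rfl fun l _ => by
          simp only [u', map_mul, hfA_comp]
      _ = 0 := h3
  -- build the splitting at stage K
  letI : Algebra (A K) (B K) := (φ K).toAlgebra
  let T : (Fin n → A K) →ₗ[A K] (Fin n → A K) := Fintype.linearCombination (A K) u'
  have hTker : LinearMap.ker (P K hiK) ≤ LinearMap.ker T := by
    rw [(stage K hiK).2, Submodule.span_le]
    rintro _ ⟨t, rfl⟩
    rw [SetLike.mem_coe, LinearMap.mem_ker]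
    funext r
    simp only [T, Fintype.linearCombination_apply, Finset.sum_apply, Pi.smul_apply,
      smul_eq_mul, Pi.zero_apply]
    exact hb' t r
  have hPKsurj : Function.Surjective (P K hiK) := (stage K hiK).1
  let eK := (P K hiK).quotKerEquivOfSurjective hPKsurj
  let σ : B K →ₗ[A K] (Fin n → A K) :=
    (Submodule.liftQ _ T hTker) ∘ₗ eK.symm.toLinearMap
  have hσ : ∀ v, σ (P K hiK v) = T v := by
    intro v
    have h1 : eK (Submodule.Quotient.mk v) = P K hiK v := rfl
    show (Submodule.liftQ _ T hTker) (eK.symm (P K hiK v)) = T v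
    rw [← h1, LinearEquiv.symm_apply_apply, Submodule.liftQ_apply]
  have hPT : ∀ v, P K hiK (T v) = P K hiK v := by
    intro v
    rw [show T v = ∑ k, v k • u' k from by
      simp [T, Fintype.linearCombination_apply]]
    rw [map_sum]
    simp only [map_smul]
    rw [show (P K hiK) v = ∑ k, v k • fB hiK (b k) from by
      simp [P, Fintype.linearCombination_apply]]
    exact Finset.sum_congr rfl fun k _ => by rw [ha' k]
  have hsplit : (P K hiK).comp σ = LinearMap.id := by
    apply LinearMap.ext
    intro x
    obtain ⟨v, rfl⟩ := hPKsurj x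
    simp only [LinearMap.comp_apply, LinearMap.id_apply]
    rw [hσ, hPT]
  haveI : Module.Projective (A K) (B K) := Module.Projective.of_split σ (P K hiK) hsplit
  haveI hBKflat : Module.Flat (A K) (B K) := inferInstance
  -- conclude: flatness propagates to all later stages by base change
  refine ⟨K, fun i hi => ?_⟩
  letI : Algebra (A K) (A i) := (fA hi).toAlgebra
  letI : Algebra (A K) (B i) := ((φ i).comp (fA hi)).toAlgebra
  letI : Algebra (A i) (B i) := (φ i).toAlgebra
  haveI := htower hi
  have hfl : Module.Flat (A i) (B i) :=
    Module.Flat.isBaseChange (R := A K) (S := A i) (M := B K) (N := B i) (hbc hi)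
  exact hfl
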